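/- arXiv:1504.07788 — 2 statements merged into one kernel-verified Lean document; each statement's English description precedes it below -/
import Mathlib

section
/- If (M, Δ) is a Garside monoid, then the set of Δ-normal words, viewed as a language over the finite alphabet Div(Δ), is a regular language. -/
/-- Left-divisibility: `f ≼ g` iff `f * c = g` for some `c`. -/
def LDvd {M : Type*} [Monoid M] (f g : M) : Prop := ∃ c, f * c = g

/-- Right-divisibility: `f` right-divides `g` iff `c * f = g` for some `c`. -/
def RDvd {M : Type*} [Monoid M] (f g : M) : Prop := ∃ c, c * f = g

/-- A Garside monoid: a cancellative monoid `M` together with a Garside element `Δ`,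
satisfying conditions (i)–(iv) of the definition. -/
structure GarsideMonoid (M : Type*) [Monoid M] where
  /-- The Garside element. -/
  Δ : M
  mul_left_cancel : ∀ a b c : M, a * b = a * c → b = c
  mul_right_cancel : ∀ a b c : M, b * a = c * a → b = c
  /-- (i) a superadditive length-type map. -/
  lam : M → ℕ
  lam_superadd : ∀ f g : M, lam f + lam g ≤ lam (f * g)
  lam_ne_zero : ∀ g : M, g ≠ 1 → lam g ≠ 0
  /-- (ii) any two elements admit a left-gcd. -/
  exists_left_gcd : ∀ f g : M, ∃ d, LDvd d f ∧ LDvd d g ∧ ∀ e, LDvd e f → LDvd e g → LDvd e d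
  /-- (ii) any two elements admit a right-lcm. -/
  exists_right_lcm : ∀ f g : M, ∃ m, LDvd f m ∧ LDvd g m ∧ ∀ e, LDvd f e → LDvd g e → LDvd m e
  /-- (ii) any two elements admit a right-gcd. -/
  exists_right_gcd : ∀ f g : M, ∃ d, RDvd d f ∧ RDvd d g ∧ ∀ e, RDvd e f → RDvd e g → RDvd e d
  /-- (ii) any two elements admit a left-lcm. -/
  exists_left_lcm : ∀ f g : M, ∃ m, RDvd f m ∧ RDvd g m ∧ ∀ e, RDvd f e → RDvd g e → RDvd m e
  /-- (iii) the left- and right-divisors of `Δ` coincide. -/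
  ldvd_iff_rdvd : ∀ d : M, LDvd d Δ ↔ RDvd d Δ
  /-- (iii) the divisors of `Δ` generate `M`. -/
  closure_div : Submonoid.closure {d : M | LDvd d Δ} = ⊤
  /-- (iv) `Div(Δ)` is finite. -/
  div_finite : {d : M | LDvd d Δ}.Finite

/-- A word `s_1|…|s_p` (with entries in `Div(Δ)`) is `Δ`-normal if, for every `i < p` and
every `s ∈ Div(Δ)`, `s_i ≺ s` implies that `s` does not left-divide `s_i s_{i+1} ⋯ s_p`. -/
def DNormal {M : Type*} [Monoid M] (G : GarsideMonoid M) (L : List M) : Prop :=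
  ∀ i : ℕ, i + 1 < L.length → ∀ s : M, LDvd s G.Δ →
    LDvd (L.getD i 1) s → L.getD i 1 ≠ s → ¬ LDvd s ((L.drop i).prod)

section Aux

variable {M : Type*} [Monoid M]

lemma ldvd_refl (a : M) : LDvd a a := ⟨1, mul_one a⟩

lemma ldvd_trans {a b c : M} (h1 : LDvd a b) (h2 : LDvd b c) : LDvd a c := by
  obtain ⟨u, rfl⟩ := h1; obtain ⟨v, rfl⟩ := h2; exact ⟨u * v, (mul_assoc _ _ _).symm⟩

lemma ldvd_mul_left {a b : M} (c : M) (h : LDvd a b) : LDvd (c * a) (c * b) := by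
  obtain ⟨u, rfl⟩ := h; exact ⟨u, mul_assoc _ _ _⟩

lemma ldvd_mul_right (a b : M) : LDvd a (a * b) := ⟨b, rfl⟩

lemma lam_one (G : GarsideMonoid M) : G.lam 1 = 0 := by
  have := G.lam_superadd 1 1
  rw [mul_one] at this
  omega

lemma eq_one_of_mul_eq_one (G : GarsideMonoid M) {c d : M} (h : c * d = 1) : c = 1 := by
  by_contra hc
  have h1 := G.lam_superadd c d
  rw [h, lam_one G] at h1
  exact G.lam_ne_zero c hc (by omega)

lemma ldvd_antisymm (G : GarsideMonoid M) {a b : M} (h1 : LDvd a b) (h2 : LDvd b a) : a = b := by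
  obtain ⟨c, rfl⟩ := h1
  obtain ⟨d, hd⟩ := h2
  have : a * (c * d) = a * 1 := by rw [mul_one, ← mul_assoc, hd]
  have hcd := G.mul_left_cancel _ _ _ this
  rw [eq_one_of_mul_eq_one G hcd, mul_one]

/-- Key complement lemma: if a simple `s` left-divides `f * g`, then `s ≼ f * v` for some
simple `v` left-dividing `g`. -/
lemma comp_lemma (G : GarsideMonoid M) (f : M) : ∀ s g : M, LDvd s G.Δ → LDvd s (f * g) →
    ∃ v, LDvd v G.Δ ∧ LDvd v g ∧ LDvd s (f * v) := by
  have hf : f ∈ Submonoid.closure {d : M | LDvd d G.Δ} := by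
    rw [G.closure_div]; trivial
  induction hf using Submonoid.closure_induction with
  | one =>
    intro s g hs hsg
    rw [one_mul] at hsg
    refine ⟨s, hs, hsg, ?_⟩
    rw [one_mul]
    exact ldvd_refl s
  | mem f hf =>
    intro s g hs hsg
    have hfΔ : LDvd f G.Δ := hf
    -- f simple.  Let m = right-lcm of f and s.
    obtain ⟨m, ⟨v, hfv⟩, hsm, hmin⟩ := G.exists_right_lcm f s
    obtain ⟨c, hfc⟩ := id hfΔ
    -- m divides f*g
    obtain ⟨w, hw⟩ := hmin (f * g) (ldvd_mul_right f g) hsg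
    -- m divides Δ = f*c
    obtain ⟨z, hz⟩ := hmin G.Δ hfΔ hs
    refine ⟨v, ?_, ?_, ?_⟩
    · -- v ≼ c ≼ Δ
      have : f * (v * z) = f * c := by
        rw [← mul_assoc, hfv, hz, hfc]
      have hvc : v * z = c := G.mul_left_cancel _ _ _ this
      have hvΔ : LDvd v c := ⟨z, hvc⟩
      have hcΔ : LDvd c G.Δ := (G.ldvd_iff_rdvd c).2 ⟨f, hfc⟩
      exact ldvd_trans hvΔ hcΔ
    · have : f * (v * w) = f * g := by rw [← mul_assoc, hfv, hw]
      exact ⟨w, G.mul_left_cancel _ _ _ this⟩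
    · rw [hfv]; exact hsm
  | mul f₁ f₂ hf₁ hf₂ ih₁ ih₂ =>
    intro s g hs hsg
    rw [mul_assoc] at hsg
    obtain ⟨v₁, hv₁Δ, hv₁, hsv₁⟩ := ih₁ s (f₂ * g) hs hsg
    obtain ⟨v, hvΔ, hvg, hv₁v⟩ := ih₂ v₁ g hv₁Δ hv₁
    refine ⟨v, hvΔ, hvg, ?_⟩
    have : LDvd (f₁ * v₁) (f₁ * (f₂ * v)) := ldvd_mul_left _ hv₁v
    rw [← mul_assoc] at this
    exact ldvd_trans hsv₁ this

/-- The local (pairwise) normality condition. -/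
def Good (G : GarsideMonoid M) (t u : M) : Prop :=
  ∀ s : M, LDvd s G.Δ → LDvd t s → t ≠ s → ¬ LDvd s (t * u)

/-- If `(t, u)` is a good pair and simple `s` divides `t * u`, then `s ≼ t`. -/
lemma good_head (G : GarsideMonoid M) {t u s : M} (ht : LDvd t G.Δ) (hs : LDvd s G.Δ)
    (hg : Good G t u) (h : LDvd s (t * u)) : LDvd s t := by
  obtain ⟨m, htm, hsm, hmin⟩ := G.exists_right_lcm t s
  have hmtu : LDvd m (t * u) := hmin _ (ldvd_mul_right t u) h
  have hmΔ : LDvd m G.Δ := hmin _ ht hs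
  have : t = m := by
    by_contra hne
    exact hg m hmΔ htm hne hmtu
  rw [this]; exact hsm

/-- Every simple divisor of the product of a good chain of simples divides the head. -/
lemma chain_head (G : GarsideMonoid M) : ∀ (rest : List M) (t : M), (∀ x ∈ t :: rest, LDvd x G.Δ) →
    List.Chain' (Good G) (t :: rest) → ∀ s, LDvd s G.Δ → LDvd s ((t :: rest).prod) →
    LDvd s t := by
  intro rest
  induction rest with
  | nil =>
    intro t _ _ s _ hsp
    simpa using hsp
  | cons u rest ih =>
    intro t hsimple hchain s hs hsp
    rw [List.prod_cons] at hsp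
    obtain ⟨v, hvΔ, hvp, hsv⟩ := comp_lemma G t s ((u :: rest).prod) hs hsp
    have hvu : LDvd v u :=
      ih u (fun x hx => hsimple x (List.mem_cons_of_mem _ hx)) hchain.tail v hvΔ hvp
    have hstu : LDvd s (t * u) := ldvd_trans hsv (ldvd_mul_left t hvu)
    have hg : Good G t u := (List.isChain_cons_cons.1 hchain).1
    exact good_head G (hsimple t List.mem_cons_self) hs hg hstu

lemma chain'_iff_getElem {α : Type*} {R : α → α → Prop} {l : List α} :
    List.Chain' R l ↔ ∀ i : ℕ, (h : i + 1 < l.length) →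
      R (l[i]'(by omega)) (l[i+1]'h) := by
  exact List.isChain_iff_getElem

/-- `DNormal` is equivalent to the chain of good pairs. -/
lemma dNormal_iff_chain' (G : GarsideMonoid M) {L : List M} (hL : ∀ x ∈ L, LDvd x G.Δ) :
    DNormal G L ↔ List.Chain' (Good G) L := by
  constructor
  · intro hn
    rw [chain'_iff_getElem]
    intro i hi
    intro s hsΔ hts hne hsdvd
    have hgd : L.getD i 1 = L[i]'(by omega) := List.getD_eq_getElem L 1 (by omega)
    have hdrop : L.drop i = L[i]'(by omega) :: L[i+1]'hi :: L.drop (i + 2) := by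
      rw [List.drop_eq_getElem_cons (show i < L.length by omega),
        List.drop_eq_getElem_cons hi]
    have : LDvd s ((L.drop i).prod) := by
      rw [hdrop, List.prod_cons, List.prod_cons, ← mul_assoc]
      exact ldvd_trans hsdvd (ldvd_mul_right _ _)
    exact hn i hi s hsΔ (hgd ▸ hts) (hgd ▸ hne) this
  · intro hc i hi s hsΔ hts hne hsdvd
    have hilt : i < L.length := by omega
    have hgd : L.getD i 1 = L[i]'hilt := List.getD_eq_getElem L 1 hilt
    have hdrop : L.drop i = L[i]'hilt :: L.drop (i + 1) := List.drop_eq_getElem_cons hilt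
    rw [hdrop] at hsdvd
    have hsimple : ∀ x ∈ L[i]'hilt :: L.drop (i + 1), LDvd x G.Δ := by
      intro x hx
      rw [← hdrop] at hx
      exact hL x (List.mem_of_mem_drop hx)
    have hchain : List.Chain' (Good G) (L[i]'hilt :: L.drop (i + 1)) := by
      rw [← hdrop]
      exact hc.drop i  -- may not exist; fallback below
    have hst : LDvd s (L[i]'hilt) :=
      chain_head G (L.drop (i + 1)) _ hsimple hchain s hsΔ hsdvd
    exact hne (by rw [hgd]; exact ldvd_antisymm G (hgd ▸ hts) hst)

end Aux

/-- In a Garside monoid `(M, Δ)`, the set of `Δ`-normal words, viewed as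
a language over the (finite) alphabet `Div(Δ)`, is a regular language. -/
theorem garsideMonoid_deltaNormal_regular {M : Type*} [Monoid M] (G : GarsideMonoid M) :
    Language.IsRegular
      { w : List {d : M // LDvd d G.Δ} | DNormal G (w.map Subtype.val) } := by
  classical
  set α := {d : M // LDvd d G.Δ} with hα
  haveI : Fintype α := G.div_finite.fintype
  set n := Fintype.card α with hn
  set e : α ≃ Fin n := Fintype.equivFin α with he
  -- the DFA
  set A : DFA α (Option (Option (Fin n))) :=
    { step := fun q a => match q with
        | none => none
        | some none => some (some (e a))
        | some (some t) => if Good G (e.symm t).1 a.1 then some (some (e a)) else none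
      start := some none
      accept := {q | q ≠ none} } with hA
  refine ⟨Option (Option (Fin n)), inferInstance, A, ?_⟩
  have heval : ∀ w : List α, A.eval w =
      if List.Chain' (fun a b : α => Good G a.1 b.1) w
      then some (w.getLast?.map e) else none := by
    intro w
    induction w using List.reverseRecOn with
    | nil => simp [DFA.eval_nil, hA, List.Chain', List.isChain_nil]
    | append_singleton w a ih =>
      rw [DFA.eval_append_singleton, ih]
      by_cases hw : List.Chain' (fun a b : α => Good G a.1 b.1) w
      · rw [if_pos hw]
        rcases hlast : w.getLast? with _ | t
        · -- w = []
          have hwnil : w = [] := List.getLast?_eq_none_iff.1 hlast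
          subst hwnil
          simp [hA, List.Chain', List.isChain_singleton]
        · have hchain : List.Chain' (fun a b : α => Good G a.1 b.1) (w ++ [a]) ↔
              Good G t.1 a.1 := by
            simp only [List.Chain'] at hw ⊢
            rw [List.isChain_append]
            simp [hw, hlast]
          by_cases hg : Good G t.1 a.1
          · rw [if_pos (hchain.2 hg)]
            simp [hA, hg, List.getLast?_concat]
          · rw [if_neg (fun h => hg (hchain.1 h))]
            simp [hA, hg]
      · rw [if_neg hw, if_neg (fun h => hw (h.prefix ⟨[a], rfl⟩))]
  ext w
  rw [DFA.mem_accepts]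
  have hsimple : ∀ x ∈ w.map (Subtype.val : α → M), LDvd x G.Δ := by
    intro x hx
    obtain ⟨a, _, rfl⟩ := List.mem_map.1 hx
    exact a.2
  show A.eval w ∈ A.accept ↔ DNormal G (w.map Subtype.val)
  rw [dNormal_iff_chain' G hsimple, show List.Chain' (Good G) (w.map Subtype.val) ↔ List.Chain' (fun a b : α => Good G a.1 b.1) w from List.isChain_map _, heval w]
  by_cases hw : List.Chain' (fun a b : α => Good G a.1 b.1) w
  · simp [hw, hA]
  · simp [hw, hA]
end

section
/- If (S, N) is a quadratic normalisation of class (4, 3), then for every word w of length p ≥ 2 over S one has N(w) = N̄_{δ_p}(w), where δ_p is defined inductively by δ_2 := 1 and δ_p := sh(δ_{p−1})|1|2|…|p−1, with sh shifting every entry of the sequence by +1. -/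
/-- A normalisation `(S, N)`: a length-preserving map `N : S* → S*` fixing the letters
and compatible with itself on factors. -/
structure Normalisation (S : Type*) where
  /-- The normalisation map. -/
  N : List S → List S
  length_eq : ∀ w : List S, (N w).length = w.length
  single : ∀ s : S, N [s] = [s]
  compat : ∀ u w v : List S, N (u ++ N w ++ v) = N (u ++ w ++ v)

/-- The restriction `N̄` of `N` to length-two words, as a map on pairs. -/
def Normalisation.pair {S : Type*} (Q : Normalisation S) (p : S × S) : S × S :=
  match Q.N [p.1, p.2] with
  | [a, b] => (a, b)
  | _ => p

/-- Apply `F` to the entries at (1-based) positions `i, i+1` of a word. -/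
def applyAt {α : Type*} (F : α × α → α × α) : ℕ → List α → List α
  | 1, a :: b :: t => (F (a, b)).1 :: (F (a, b)).2 :: t
  | n + 2, a :: t => a :: applyAt F (n + 1) t
  | _, l => l

/-- Apply `F` successively at the positions listed in `u` (leftmost entry first):
`F_u = F_{i_n} ∘ ⋯ ∘ F_{i_1}` for `u = i_1|…|i_n`. -/
def applySeq {α : Type*} (F : α × α → α × α) (u : List ℕ) (w : List α) : List α :=
  u.foldl (fun v i => applyAt F i v) w

/-- `altSeq s m` is the alternating sequence of `1`s and `2`s of length `m` starting
with `s`: `altSeq 1 m = 121⋯[m]` and `altSeq 2 m = 212⋯[m]`. -/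
def altSeq : ℕ → ℕ → List ℕ
  | _, 0 => []
  | s, m + 1 => s :: altSeq (3 - s) m

/-- A normalisation is quadratic if (i) a word is `N`-normal iff all its length-two
factors are, and (ii) `N(w)` is always obtained by applying `N̄` at finitely many
positions. -/
def Normalisation.Quadratic {S : Type*} (Q : Normalisation S) : Prop :=
  (∀ w : List S, Q.N w = w ↔
    ∀ u v : List S, ∀ a b : S, w = u ++ [a, b] ++ v → Q.N [a, b] = [a, b]) ∧
  (∀ w : List S, ∃ u : List ℕ, Q.N w = applySeq Q.pair u w)

/-- `(S, N)` is of left class `c`: `N(w) = N̄_{121⋯[c]}(w)` for every length-3 word. -/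
def Normalisation.LeftClass {S : Type*} (Q : Normalisation S) (c : ℕ) : Prop :=
  ∀ w : List S, w.length = 3 → Q.N w = applySeq Q.pair (altSeq 1 c) w

/-- `(S, N)` is of right class `c`: `N(w) = N̄_{212⋯[c]}(w)` for every length-3 word. -/
def Normalisation.RightClass {S : Type*} (Q : Normalisation S) (c : ℕ) : Prop :=
  ∀ w : List S, w.length = 3 → Q.N w = applySeq Q.pair (altSeq 2 c) w

/-- The sequence of positions `δ_p`: `δ_2 = 1` and `δ_p = sh(δ_{p−1})|1|2|…|p−1`,
where `sh` shifts every entry by `+1`. -/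
def deltaSeq : ℕ → List ℕ
  | 0 => []
  | p + 1 => (deltaSeq p).map (· + 1) ++ (List.range p).map (· + 1)


section Aux

variable {S : Type*} (Q : Normalisation S)

/-- The word `N [a,b]` written via `Q.pair`. -/
lemma pair_spec (a b : S) : Q.N [a, b] = [(Q.pair (a, b)).1, (Q.pair (a, b)).2] := by
  have h := Q.length_eq [a, b]
  match hw : Q.N [a, b] with
  | [x, y] => simp [Normalisation.pair, hw]
  | [] => rw [hw] at h; simp at h
  | [x] => rw [hw] at h; simp at h
  | x :: y :: z :: t => rw [hw] at h; simp at h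

lemma N_idem (w : List S) : Q.N (Q.N w) = Q.N w := by
  have h := Q.compat [] w []
  simpa using h

lemma pair_of_normal {a b : S} (h : Q.N [a, b] = [a, b]) : Q.pair (a, b) = (a, b) := by
  have h2 := pair_spec Q a b
  rw [h] at h2
  injection h2 with h3 h4
  injection h4 with h5 _
  exact Prod.ext_iff.mpr ⟨h3.symm, h5.symm⟩

lemma pair_normal (a b : S) : Q.N [(Q.pair (a, b)).1, (Q.pair (a, b)).2] =
    [(Q.pair (a, b)).1, (Q.pair (a, b)).2] := by
  conv_lhs => rw [← pair_spec]
  rw [N_idem, pair_spec]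

lemma N_applyAt : ∀ (i : ℕ) (w : List S), Q.N (applyAt Q.pair i w) = Q.N w
  | 1, a :: b :: t => by
    show Q.N ((Q.pair (a,b)).1 :: (Q.pair (a,b)).2 :: t) = _
    have : (Q.pair (a,b)).1 :: (Q.pair (a,b)).2 :: t = [] ++ Q.N [a, b] ++ t := by
      rw [pair_spec]; rfl
    rw [this, Q.compat [] [a, b] t]; rfl
  | n + 2, a :: t => by
    show Q.N (a :: applyAt Q.pair (n + 1) t) = _
    have ih := N_applyAt (n + 1) t
    have e1 : a :: applyAt Q.pair (n+1) t = [a] ++ applyAt Q.pair (n+1) t ++ [] := by simp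
    have e2 : a :: t = [a] ++ t ++ [] := by simp
    rw [e1, e2, ← Q.compat [a] (applyAt Q.pair (n+1) t) [], ← Q.compat [a] t [], ih]
  | 0, l => rfl
  | 1, [] => rfl
  | 1, [a] => rfl
  | n + 2, [] => rfl

lemma N_applySeq : ∀ (u : List ℕ) (w : List S), Q.N (applySeq Q.pair u w) = Q.N w
  | [], w => rfl
  | i :: u, w => by
    show Q.N (applySeq Q.pair u (applyAt Q.pair i w)) = _
    rw [N_applySeq u, N_applyAt]

lemma applyAt_length {α : Type*} (F : α × α → α × α) :
    ∀ (i : ℕ) (w : List α), (applyAt F i w).length = w.length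
  | 1, a :: b :: t => rfl
  | n + 2, a :: t => by
    show (a :: applyAt F (n+1) t).length = _
    simp [applyAt_length F (n+1) t]
  | 0, l => rfl
  | 1, [] => rfl
  | 1, [a] => rfl
  | n + 2, [] => rfl

lemma applySeq_length {α : Type*} (F : α × α → α × α) :
    ∀ (u : List ℕ) (w : List α), (applySeq F u w).length = w.length
  | [], w => rfl
  | i :: u, w => by
    show (applySeq F u (applyAt F i w)).length = _
    rw [applySeq_length F u, applyAt_length]

lemma applyAt_succ_cons {α : Type*} (F : α × α → α × α) {i : ℕ} (hi : 1 ≤ i) (a : α)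
    (t : List α) : applyAt F (i + 1) (a :: t) = a :: applyAt F i t := by
  match i, hi with
  | n + 1, _ => rfl

lemma applySeq_map_succ {α : Type*} (F : α × α → α × α) :
    ∀ (u : List ℕ), (∀ i ∈ u, 1 ≤ i) → ∀ (a : α) (t : List α),
      applySeq F (u.map (· + 1)) (a :: t) = a :: applySeq F u t
  | [], _, a, t => rfl
  | i :: u, h, a, t => by
    have hi : 1 ≤ i := h i (by simp)
    show applySeq F (u.map (· + 1)) (applyAt F (i + 1) (a :: t)) = _
    rw [applyAt_succ_cons F hi,
      applySeq_map_succ F u (fun j hj => h j (by simp [hj])) a (applyAt F i t)]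
    rfl

lemma deltaSeq_pos : ∀ (p : ℕ), ∀ i ∈ deltaSeq p, 1 ≤ i
  | 0 => by simp [deltaSeq]
  | p + 1 => by
    intro i hi
    simp only [deltaSeq, List.mem_append, List.mem_map] at hi
    rcases hi with ⟨j, _, rfl⟩ | ⟨j, _, rfl⟩ <;> omega

/-- The word `w` is normal in the factor sense. -/
def Nrm (w : List S) : Prop :=
  ∀ u v : List S, ∀ a b : S, w = u ++ [a, b] ++ v → Q.N [a, b] = [a, b]

lemma nrm_short {w : List S} (h : w.length ≤ 1) : Nrm Q w := by
  intro u v a b he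
  subst he
  simp at h
  omega

lemma nrm_tail {a : S} {t : List S} (h : Nrm Q (a :: t)) : Nrm Q t := by
  intro u v x y he
  exact h (a :: u) v x y (by simp [he])

lemma nrm_head2 {a b : S} {t : List S} (h : Nrm Q (a :: b :: t)) : Q.N [a, b] = [a, b] :=
  h [] t a b rfl

lemma nrm_cons {a b : S} {t : List S} (hab : Q.N [a, b] = [a, b]) (h : Nrm Q (b :: t)) :
    Nrm Q (a :: b :: t) := by
  intro u v x y he
  match u, he with
  | [], he => injection he with h1 h2; injection h2 with h3 h4; subst h1; subst h3; exact hab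
  | c :: u', he =>
    injection he with h1 h2
    exact h u' v x y h2

/-- The domino rule, a consequence of right class 3. -/
lemma domino {b c : S} (hbc : Q.N [b, c] = [b, c]) (hQ : Q.Quadratic) (h3 : Q.RightClass 3)
    (a : S) :
    Q.N [(Q.pair (a, b)).1, (Q.pair ((Q.pair (a, b)).2, c)).1] =
      [(Q.pair (a, b)).1, (Q.pair ((Q.pair (a, b)).2, c)).1] := by
  have hN := h3 [a, b, c] rfl
  set a1 := (Q.pair (a, b)).1
  set b1 := (Q.pair (a, b)).2
  set b2 := (Q.pair (b1, c)).1
  set c2 := (Q.pair (b1, c)).2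
  have step : applySeq Q.pair (altSeq 2 3) [a, b, c] = [a1, b2, c2] := by
    show applyAt Q.pair 2 (applyAt Q.pair 1 (applyAt Q.pair 2 [a, b, c])) = _
    have e1 : applyAt Q.pair 2 [a, b, c] = [a, b, c] := by
      show a :: (Q.pair (b, c)).1 :: (Q.pair (b, c)).2 :: [] = _
      rw [pair_of_normal Q hbc]
    rw [e1]
    rfl
  rw [step] at hN
  have hnorm : Q.N [a1, b2, c2] = [a1, b2, c2] := by rw [← hN, N_idem]
  exact ((hQ.1 [a1, b2, c2]).mp hnorm) [] [c2] a1 b2 rfl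

/-- `[1, 2, …, n]`. -/
def rangeList (n : ℕ) : List ℕ := (List.range n).map (· + 1)

lemma rangeList_succ (n : ℕ) : rangeList (n + 1) = 1 :: (rangeList n).map (· + 1) := by
  simp only [rangeList, List.range_succ_eq_map, List.map_cons, List.map_map]

lemma rangeList_pos (n : ℕ) : ∀ i ∈ rangeList n, 1 ≤ i := by
  intro i hi
  simp only [rangeList, List.mem_map] at hi
  obtain ⟨j, _, rfl⟩ := hi
  omega

/-- Core lemma: pushing a letter through a normal word with positions `1, …, p`. -/
lemma core (hQ : Q.Quadratic) (h3 : Q.RightClass 3) :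
    ∀ (t : List S) (b a : S), Nrm Q (b :: t) →
      ∃ r, applySeq Q.pair (rangeList (t.length + 1)) (a :: b :: t) =
          (Q.pair (a, b)).1 :: r ∧ Nrm Q ((Q.pair (a, b)).1 :: r)
  | [], b, a, _ => by
    refine ⟨[(Q.pair (a, b)).2], ?_, ?_⟩
    · rfl
    · exact nrm_cons Q (pair_normal Q a b) (nrm_short Q (by simp))
  | c :: t', b, a, h => by
    have hbc : Q.N [b, c] = [b, c] := nrm_head2 Q h
    have htail : Nrm Q (c :: t') := nrm_tail Q h
    obtain ⟨r, hr, hnr⟩ := core hQ h3 t' c (Q.pair (a, b)).2 htail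
    refine ⟨(Q.pair ((Q.pair (a, b)).2, c)).1 :: r, ?_, ?_⟩
    · show applySeq Q.pair (rangeList ((c :: t').length + 1)) (a :: b :: c :: t') = _
      rw [show (c :: t').length + 1 = (t'.length + 1) + 1 by simp, rangeList_succ]
      show applySeq Q.pair ((rangeList (t'.length + 1)).map (· + 1))
          (applyAt Q.pair 1 (a :: b :: c :: t')) = _
      have e1 : applyAt Q.pair 1 (a :: b :: c :: t') =
          (Q.pair (a, b)).1 :: (Q.pair (a, b)).2 :: c :: t' := rfl
      rw [e1, applySeq_map_succ Q.pair _ (rangeList_pos _), hr]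
    · have hd := domino Q hbc hQ h3 a
      exact nrm_cons Q hd hnr
  termination_by t => t.length

/-- Unfolding of `deltaSeq`. -/
lemma deltaSeq_succ (p : ℕ) : deltaSeq (p + 1) = (deltaSeq p).map (· + 1) ++ rangeList p :=
  rfl

lemma applySeq_append {α : Type*} (F : α × α → α × α) (u v : List ℕ) (w : List α) :
    applySeq F (u ++ v) w = applySeq F v (applySeq F u w) := by
  simp [applySeq, List.foldl_append]

/-- Main combinatorial lemma: `applySeq (deltaSeq p) w` is normal. -/
lemma nrm_applySeq_delta (hQ : Q.Quadratic) (h3 : Q.RightClass 3) :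
    ∀ (p : ℕ) (w : List S), w.length = p → 2 ≤ p → Nrm Q (applySeq Q.pair (deltaSeq p) w)
  | p + 1, a :: v, hl, hp => by
    have hv : v.length = p := by simpa using hl
    rw [deltaSeq_succ, applySeq_append,
      applySeq_map_succ Q.pair _ (deltaSeq_pos p) a v]
    set v1 := applySeq Q.pair (deltaSeq p) v with hv1
    have hlen : v1.length = p := by rw [hv1, applySeq_length]; exact hv
    have hnv1 : Nrm Q v1 := by
      rcases Nat.lt_or_ge p 2 with h | h
      · have hp1 : p = 1 := by omega
        subst hp1
        have hv1v : v1 = v := hv1.trans rfl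
        rw [hv1v]
        exact nrm_short Q (by omega)
      · exact nrm_applySeq_delta hQ h3 p v hv h
    obtain ⟨b, t, hbt⟩ : ∃ b t, v1 = b :: t := by
      match v1, hlen with
      | b :: t, _ => exact ⟨b, t, rfl⟩
      | [], hlen => simp at hlen; omega
    rw [hbt] at hnv1 ⊢
    have hrl : rangeList p = rangeList (t.length + 1) := by
      rw [hbt] at hlen
      simp at hlen
      rw [← hlen]
    rw [hrl]
    obtain ⟨r, hr, hnr⟩ := core Q hQ h3 t b a hnv1
    rw [hr]
    exact hnr

end Aux

/-- If `(S, N)` is a quadratic normalisation of class `(4, 3)`, then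
`N(w) = N̄_{δ_p}(w)` for every word `w` of length `p ≥ 2`. -/
theorem quadratic_class43_deltaSeq_recipe {S : Type*} (Q : Normalisation S)
    (hQ : Q.Quadratic) (h4 : Q.LeftClass 4) (h3 : Q.RightClass 3)
    (w : List S) (hp : 2 ≤ w.length) :
    Q.N w = applySeq Q.pair (deltaSeq w.length) w := by
  have hn := nrm_applySeq_delta Q hQ h3 w.length w rfl hp
  have h1 : Q.N (applySeq Q.pair (deltaSeq w.length) w) = Q.N w := N_applySeq Q _ w
  have h2 : Q.N (applySeq Q.pair (deltaSeq w.length) w) =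
      applySeq Q.pair (deltaSeq w.length) w := (hQ.1 _).mpr hn
  rw [← h2, h1]
end
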